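/- arXiv:1711.08584 — 2 statements merged into one kernel-verified Lean document; each statement's English description precedes it below -/
import Mathlib

section
/- For integers n ≥ 1, 0 ≤ m ≤ n, and 0 ≤ k ≤ n-1, the number of (n,m)-Dyck paths with exactly k peaks equals the number of (n,n-m)-Dyck paths with exactly k valleys. -/
-- A lattice path is a list of steps: `true` = up step `(0,1)`, `false` = down step `(1,0)`.
/-- The number of up steps of `p` that lie strictly below the line `y = x`
(i.e. up steps starting at a point with `y < x`). -/
def upsBelow (p : List Bool) : ℕ :=
  (List.range p.length).countP fun i =>
    p.getD i false && decide ((p.take i).count true < (p.take i).count false)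

/-- `IsNM n m p`: `p` is an `(n,m)`-Dyck path, i.e. a path from `(0,0)` to `(n,n)`
with exactly `m` up steps below the line `y = x`. -/
def IsNM (n m : ℕ) (p : List Bool) : Prop :=
  p.length = 2 * n ∧ p.count true = n ∧ upsBelow p = m

/-- The number of peaks (`UD` factors) of `p`. -/
def peaks (p : List Bool) : ℕ :=
  (List.range (p.length - 1)).countP fun i => p.getD i false && !p.getD (i + 1) true

/-- The number of `(n,m)`-Dyck paths with exactly `k` peaks. -/
noncomputable def pC (n m k : ℕ) : ℕ :=
  Nat.card {p : List Bool // IsNM n m p ∧ peaks p = k}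

/-- The number of `(n,m)`-Dyck paths with exactly `k` peaks whose first step is `a`
and whose last step is `b`. -/
noncomputable def pXY (n m k : ℕ) (a b : Bool) : ℕ :=
  Nat.card {p : List Bool // IsNM n m p ∧ peaks p = k ∧
    p.head? = some a ∧ p.getLast? = some b}
/-- The number of valleys (`DU` factors) of `p`. -/
def valleys (p : List Bool) : ℕ :=
  (List.range (p.length - 1)).countP fun i => !p.getD i true && p.getD (i + 1) false

def gub : ℤ → List Bool → ℕ
  | _, [] => 0
  | c, true :: p => (if 0 < c then 1 else 0) + gub (c - 1) p
  | c, false :: p => gub (c + 1) p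

def gda : ℤ → List Bool → ℕ
  | _, [] => 0
  | c, true :: p => gda (c - 1) p
  | c, false :: p => (if c < 0 then 1 else 0) + gda (c + 1) p

lemma gda_eq_gub_map (p : List Bool) : ∀ c : ℤ, gda c p = gub (-c) (p.map not) := by
  induction p with
  | nil => intro c; rfl
  | cons a t ih =>
    intro c
    cases a
    · show (if c < 0 then 1 else 0) + gda (c + 1) t = (if 0 < -c then 1 else 0) + gub (-c - 1) (t.map not)
      rw [ih, show -(c + 1) = -c - 1 by ring]
      split_ifs with h1 h2 <;> first | rfl | omega
    · show gda (c - 1) t = gub (-c + 1) (t.map not)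
      rw [ih, show -(c - 1) = -c + 1 by ring]

lemma gub_add_gda (p : List Bool) : ∀ c : ℤ,
    gub c p + gda c p + (-(c + (p.count false : ℤ) - p.count true)).toNat
      = p.count true + (-c).toNat := by
  induction p with
  | nil => intro c; simp [gub, gda]
  | cons a t ih =>
    intro c
    cases a
    · have h := ih (c + 1)
      show gub (c + 1) t + ((if c < 0 then 1 else 0) + gda (c + 1) t)
          + (-(c + ((false :: t).count false : ℤ) - (false :: t).count true)).toNat
        = (false :: t).count true + (-c).toNat
      simp only [List.count_cons, beq_self_eq_true, if_true, beq_iff_eq] at *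
      push_cast at *
      split_ifs with hc <;> omega
    · have h := ih (c - 1)
      show ((if 0 < c then 1 else 0) + gub (c - 1) t) + gda (c - 1) t
          + (-(c + ((true :: t).count false : ℤ) - (true :: t).count true)).toNat
        = (true :: t).count true + (-c).toNat
      simp only [List.count_cons, beq_self_eq_true, if_true, beq_iff_eq] at *
      push_cast at *
      split_ifs with hc <;> omega

lemma upsBelow_aux (p : List Bool) : ∀ u d : ℕ,
    (List.range p.length).countP (fun i =>
      p.getD i false && decide ((p.take i).count true + u < (p.take i).count false + d))
      = gub ((d : ℤ) - u) p := by
  induction p with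
  | nil => intro u d; rfl
  | cons a t ih =>
    intro u d
    rw [List.length_cons, List.range_succ_eq_map, List.countP_cons, List.countP_map]
    have h1 : ((List.range t.length).countP
        ((fun i => (a :: t).getD i false &&
          decide (((a :: t).take i).count true + u < ((a :: t).take i).count false + d)) ∘
          (· + 1)))
        = (List.range t.length).countP (fun i =>
          t.getD i false && decide ((t.take i).count true + (u + (a :: []).count true)
            < (t.take i).count false + (d + (a :: []).count false))) := by
      apply List.countP_congr
      intro i _
      simp only [Function.comp, List.take_succ_cons, List.getD_cons_succ, List.count_cons]
      cases a <;> simp <;> intros <;> constructor <;> intros <;> omega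
    rw [h1, ih]
    cases a
    · show gub (((d:ℤ)+1) - u) t + _ = gub ((d:ℤ) - u) (false :: t)
      simp [gub]
      ring_nf
    · show gub ((d:ℤ) - (u+1)) t + _ = gub ((d:ℤ) - u) (true :: t)
      simp [gub, Nat.add_comm]
      ring_nf

example : True := trivial

lemma upsBelow_eq_gub (p : List Bool) : upsBelow p = gub 0 p := by
  have h := upsBelow_aux p 0 0
  simp only [add_zero, Nat.cast_zero, sub_zero] at h
  rw [← h, upsBelow]

lemma count_false_map_not (p : List Bool) : (p.map not).count false = p.count true := by
  induction p with
  | nil => rfl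
  | cons a t ih => cases a <;> simp [List.count_cons, ih]

lemma count_true_map_not (p : List Bool) : (p.map not).count true = p.count false := by
  induction p with
  | nil => rfl
  | cons a t ih => cases a <;> simp [List.count_cons, ih]

lemma count_add_count (p : List Bool) : p.count true + p.count false = p.length := by
  induction p with
  | nil => rfl
  | cons a t ih => cases a <;> simp [List.count_cons] <;> omega

lemma valleys_map_not (p : List Bool) : valleys (p.map not) = peaks p := by
  unfold valleys peaks
  rw [List.length_map]
  apply List.countP_congr
  intro i hi
  rw [List.mem_range] at hi
  have h1 : i < p.length := by omega
  have h2 : i + 1 < p.length := by omega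
  have e1 : (p.map not).getD i true = !(p.getD i false) := by
    rw [List.getD_eq_getElem _ _ (by simpa), List.getD_eq_getElem _ _ h1]
    simp
  have e2 : (p.map not).getD (i+1) false = !(p.getD (i+1) true) := by
    rw [List.getD_eq_getElem _ _ (by simpa), List.getD_eq_getElem _ _ h2]
    simp
  rw [e1, e2]
  simp

lemma isNM_map_not {n m : ℕ} {p : List Bool} (hm : m ≤ n) (h : IsNM n m p) :
    IsNM n (n - m) (p.map not) := by
  obtain ⟨hl, hc, hu⟩ := h
  have hcf : p.count false = n := by
    have := count_add_count p
    omega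
  refine ⟨by simpa using hl, by rw [count_true_map_not, hcf], ?_⟩
  have key := gub_add_gda p 0
  have hz : (-(0 + (p.count false : ℤ) - p.count true)).toNat = 0 := by
    rw [hcf, hc]; simp
  rw [hz] at key
  have hgda : gda 0 p = gub 0 (p.map not) := by
    have := gda_eq_gub_map p 0
    simpa using this
  rw [upsBelow_eq_gub, ← hgda]
  rw [upsBelow_eq_gub] at hu
  rw [hc] at key
  simp at key
  omega

/-- The number of `(n,m)`-Dyck paths with `k` peaks equals the number of
`(n,n-m)`-Dyck paths with `k` valleys. -/
theorem stmt_17 (n m k : ℕ) (hn : 1 ≤ n) (hm : m ≤ n) (hk : k ≤ n - 1) :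
    Nat.card {p : List Bool // IsNM n m p ∧ peaks p = k} =
      Nat.card {p : List Bool // IsNM n (n - m) p ∧ valleys p = k} := by
  apply Nat.card_congr
  have inv : ∀ p : List Bool, (p.map not).map not = p := by
    intro p
    rw [List.map_map, show (not ∘ not) = id from funext (by simp), List.map_id]
  refine ⟨fun ⟨p, hp, hpk⟩ => ⟨p.map not, isNM_map_not hm hp, by rw [valleys_map_not, hpk]⟩,
    fun ⟨q, hq, hqk⟩ => ⟨q.map not, ?_, ?_⟩, fun ⟨p, _, _⟩ => by simp [inv p], fun ⟨q, _, _⟩ => by simp [inv q]⟩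
  · have := isNM_map_not (Nat.sub_le n m) hq
    rwa [Nat.sub_sub_self hm] at this
  · rw [← valleys_map_not (q.map not), inv, hqk]
end

section
/- Every lattice path from (0,0) to (n,n) using up steps (0,1) and down steps (1,0) that starts with an up step and has at least one up step below the line y=x can be uniquely decomposed as S·D·N·U·Q, where D is the first down step ending strictly below y=x, U is the first up step ending on the line y=x after D, S is a Dyck path, and the complement of N (swapping U and D) is a Dyck path. -/
/-- A Dyck path (from `(0,0)` to `(j,j)` for some `j`, never strictly below `y = x`). -/
def IsDyckW (q : List Bool) : Prop :=
  q.count true = q.count false ∧ ∀ i, (q.take i).count false ≤ (q.take i).count true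

private lemma count_tf (l : List Bool) : l.count true + l.count false = l.length := by
  induction l with
  | nil => simp
  | cons a t ih => cases a <;> simp [List.count_cons] <;> omega

private lemma count_take_mono (l : List Bool) (b : Bool) {i j : ℕ} (h : i ≤ j) :
    (l.take i).count b ≤ (l.take j).count b := by
  rw [show l.take i = (l.take j).take i by rw [List.take_take, min_eq_left h]]
  exact (List.take_sublist _ _).count_le _

private lemma take_succ_eq (l : List Bool) {j : ℕ} (h : j < l.length) :
    l.take (j+1) = l.take j ++ [l[j]] := by
  rw [List.take_succ]; simp [List.getElem?_eq_getElem h]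

private lemma count_drop_take (p : List Bool) (a k : ℕ) (b : Bool) :
    ((p.drop a).take k).count b + (p.take a).count b = (p.take (a+k)).count b := by
  rw [List.take_add, List.count_append]; ring


/-- Every path from `(0,0)` to `(n,n)` starting with an up step and having at least one up
step below `y = x` decomposes uniquely as `S ++ [D] ++ N ++ [U] ++ Q`, where `D` is the
first down step ending strictly below `y = x`, `U` is the first up step after it ending on
the line `y = x`, `S` is a Dyck path, and the complement of `N` is a Dyck path. -/
theorem stmt_18 (n : ℕ) (p : List Bool) (hlen : p.length = 2 * n) (hup : p.count true = n)
    (hstart : p.head? = some true) (hbelow : 1 ≤ upsBelow p) :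
    ∃! SNQ : List Bool × List Bool × List Bool,
      p = SNQ.1 ++ false :: (SNQ.2.1 ++ true :: SNQ.2.2) ∧
      IsDyckW SNQ.1 ∧ IsDyckW (SNQ.2.1.map (!·)) ∧
      -- the path never goes strictly below `y = x` before the step `D`
      (∀ j ≤ SNQ.1.length, (p.take j).count false ≤ (p.take j).count true) ∧
      -- the path stays strictly below `y = x` from `D` up to (but excluding) the end of `U`
      (∀ j, SNQ.1.length + 1 ≤ j → j ≤ SNQ.1.length + 1 + SNQ.2.1.length →
        (p.take j).count true < (p.take j).count false) ∧
      -- the step `U` ends on the line `y = x`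
      (p.take (SNQ.1.length + 1 + SNQ.2.1.length + 1)).count true =
        (p.take (SNQ.1.length + 1 + SNQ.2.1.length + 1)).count false := by
  clear hstart
  have hcf : p.count false = n := by have := count_tf p; omega
  -- existence of a point strictly below, with a witness below the length
  have hexw : ∃ i ∈ List.range p.length,
      (p.getD i false && decide ((p.take i).count true < (p.take i).count false)) = true := by
    rw [← List.countP_pos_iff]; exact hbelow
  obtain ⟨i0, hi0mem, hi0⟩ := hexw
  have hi0len : i0 < p.length := List.mem_range.mp hi0mem
  have hi0lt : (p.take i0).count true < (p.take i0).count false := by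
    simp only [Bool.and_eq_true, decide_eq_true_eq] at hi0
    exact hi0.2
  have hex : ∃ j, (p.take j).count true < (p.take j).count false := ⟨i0, hi0lt⟩
  set m := Nat.find hex with hm_def
  have hm_lt : (p.take m).count true < (p.take m).count false := Nat.find_spec hex
  have hm_min : ∀ j < m, (p.take j).count false ≤ (p.take j).count true := by
    intro j hj
    have := Nat.find_min hex hj
    omega
  have hm_le_i0 : m ≤ i0 := Nat.find_min' hex hi0lt
  have hm_len : m < p.length := lt_of_le_of_lt hm_le_i0 hi0len
  have hm_pos : 0 < m := by
    rcases Nat.eq_zero_or_pos m with h | h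
    · rw [h] at hm_lt; simp at hm_lt
    · exact h
  set s := m - 1 with hs_def
  have hsm : s + 1 = m := by omega
  have hs_len : s < p.length := by omega
  have hstep : p.take m = p.take s ++ [p[s]] := by
    rw [← hsm]; exact take_succ_eq p hs_len
  have hs_prev : (p.take s).count false ≤ (p.take s).count true := hm_min s (by omega)
  have hps : p[s] = false := by
    by_contra h
    have : p[s] = true := by revert h; cases p[s] <;> simp
    rw [hstep, this, List.count_append, List.count_append] at hm_lt
    simp at hm_lt
    omega
  have hcount_m_false : (p.take m).count false = (p.take s).count false + 1 := by
    rw [hstep, hps, List.count_append]; simp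
  have hcount_m_true : (p.take m).count true = (p.take s).count true := by
    rw [hstep, hps, List.count_append]; simp
  have hS_eq : (p.take s).count true = (p.take s).count false := by omega
  have hm_eq : (p.take m).count false = (p.take m).count true + 1 := by omega
  -- first return to the diagonal after m
  have hex2 : ∃ j, m ≤ j ∧ (p.take j).count false ≤ (p.take j).count true := by
    refine ⟨p.length, le_of_lt hm_len, ?_⟩
    rw [List.take_length]; omega
  set t := Nat.find hex2 with ht_def
  have ht_spec := Nat.find_spec hex2
  rw [← ht_def] at ht_spec
  have ht_min : ∀ j, m ≤ j → j < t → (p.take j).count true < (p.take j).count false := by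
    intro j hj hjt
    have := Nat.find_min hex2 hjt
    omega
  have hmt : m < t := by
    rcases Nat.lt_or_ge m t with h | h
    · exact h
    · exfalso
      have h2 := ht_spec.2
      have h3 : t = m := le_antisymm h ht_spec.1
      rw [h3] at h2
      omega
  have ht_len : t ≤ p.length := Nat.find_min' hex2 ⟨le_of_lt hm_len, by rw [List.take_length]; omega⟩
  have ht1_len : t - 1 < p.length := by omega
  have ht1_lt : (p.take (t-1)).count true < (p.take (t-1)).count false :=
    ht_min (t-1) (by omega) (by omega)
  have hstep2 : p.take t = p.take (t-1) ++ [p[t-1]] := by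
    have h := take_succ_eq p ht1_len
    rw [show t - 1 + 1 = t by omega] at h
    exact h
  have hpt : p[t-1] = true := by
    by_contra h
    have : p[t-1] = false := by revert h; cases p[t-1] <;> simp
    have h2 := ht_spec.2
    rw [hstep2, this, List.count_append, List.count_append] at h2
    simp at h2; omega
  have hcount_t_true : (p.take t).count true = (p.take (t-1)).count true + 1 := by
    rw [hstep2, hpt, List.count_append]; simp
  have hcount_t_false : (p.take t).count false = (p.take (t-1)).count false := by
    rw [hstep2, hpt, List.count_append]; simp
  have ht_eq : (p.take t).count true = (p.take t).count false := by
    have := ht_spec.2; omega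
  have ht1_eq : (p.take (t-1)).count false = (p.take (t-1)).count true + 1 := by omega
  set k := t - 1 - m with hk_def
  have hmk : m + k = t - 1 := by omega
  -- the witness
  set S := p.take s with hS_def
  set N := (p.drop m).take k with hN_def
  set Q := p.drop t with hQ_def
  have hSlen : S.length = s := by rw [hS_def, List.length_take]; omega
  have hNlen : N.length = k := by
    rw [hN_def, List.length_take, List.length_drop]; omega
  have hdecomp : p = S ++ false :: (N ++ true :: Q) := by
    have h1 : p.drop s = false :: p.drop m := by
      rw [List.drop_eq_getElem_cons hs_len, hps, hsm]
    have h2 : p.drop m = N ++ true :: Q := by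
      conv_lhs => rw [← List.take_append_drop k (p.drop m)]
      have hd : (p.drop m).drop k = p.drop (t - 1) := by
        rw [List.drop_drop, hmk]
      rw [hd, List.drop_eq_getElem_cons ht1_len, hpt, show t - 1 + 1 = t by omega]
    conv_lhs => rw [← List.take_append_drop s p, h1, h2]
  -- counts of N prefixes
  have hNtake : ∀ i, i ≤ k → ∀ b, (N.take i).count b + (p.take m).count b =
      (p.take (m + i)).count b := by
    intro i hi b
    rw [hN_def, List.take_take, min_eq_left hi]
    exact count_drop_take p m i b
  refine ⟨(S, N, Q), ⟨hdecomp, ?_, ?_, ?_, ?_, ?_⟩, ?_⟩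
  · -- IsDyckW S
    constructor
    · exact hS_eq
    · intro i
      rw [hS_def, List.take_take]
      exact hm_min _ (by omega)
  · -- IsDyckW (N.map !)
    have hinj : Function.Injective (fun b : Bool => !b) :=
      Function.Involutive.injective (fun b => Bool.not_not b)
    have hcmap : ∀ (l : List Bool) (b : Bool), (l.map (!·)).count b = l.count (!b) := by
      intro l b
      have := List.count_map_of_injective l (fun b : Bool => !b) hinj (!b)
      simpa using this
    constructor
    · rw [hcmap, hcmap]
      have h1 := hNtake k le_rfl true
      have h0 := hNtake k le_rfl false
      rw [hmk, List.take_of_length_le (le_of_eq hNlen)] at h1 h0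
      have m1 := count_take_mono p true (show m ≤ t - 1 by omega)
      have m0 := count_take_mono p false (show m ≤ t - 1 by omega)
      simp only [Bool.not_true, Bool.not_false]
      omega
    · intro i
      rw [← List.map_take, hcmap, hcmap]
      simp only [Bool.not_true, Bool.not_false]
      rcases le_or_gt i k with hik | hik
      · have h1 := hNtake i hik true
        have h0 := hNtake i hik false
        have hlt := ht_min (m + i) (by omega) (by omega)
        have m1 := count_take_mono p true (show m ≤ m + i by omega)
        have m0 := count_take_mono p false (show m ≤ m + i by omega)
        omega
      · rw [List.take_of_length_le (by omega)]
        have h1 := hNtake k le_rfl true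
        have h0 := hNtake k le_rfl false
        rw [hmk, List.take_of_length_le (le_of_eq hNlen)] at h1 h0
        have m1 := count_take_mono p true (show m ≤ t - 1 by omega)
        have m0 := count_take_mono p false (show m ≤ t - 1 by omega)
        omega
  · -- before D
    intro j hj
    rw [hSlen] at hj
    exact hm_min j (by omega)
  · -- strictly below between D and U
    intro j hj1 hj2
    rw [hSlen] at hj1
    rw [hSlen, hNlen] at hj2
    exact ht_min j (by omega) (by omega)
  · -- U ends on the diagonal
    rw [hSlen, hNlen, show s + 1 + k + 1 = t by omega]
    exact ht_eq
  · -- uniqueness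
    rintro ⟨S', N', Q'⟩ ⟨heq, hS', hN', h4, h5, h6⟩
    simp only at heq h4 h5 h6 ⊢
    have hm' : m = S'.length + 1 := by
      have hle : m ≤ S'.length + 1 :=
        Nat.find_min' hex (h5 (S'.length + 1) le_rfl (by omega))
      rcases Nat.lt_or_ge S'.length m with h | h
      · omega
      · exfalso
        have := h4 m (by omega)
        omega
    have ht' : t = S'.length + 1 + N'.length + 1 := by
      have hle : t ≤ S'.length + 1 + N'.length + 1 :=
        Nat.find_min' hex2 ⟨by omega, le_of_eq h6.symm⟩
      rcases Nat.lt_or_ge t (S'.length + 1 + N'.length + 1) with h | h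
      · exfalso
        have := h5 t (by omega) (by omega)
        have := ht_spec.2
        omega
      · omega
    have hss : S'.length = s := by omega
    have hkk : N'.length = k := by omega
    have hS'eq : S' = S := by
      have h1 : S' = p.take S'.length := by rw [heq, List.take_left]
      rw [h1, hS_def, hss]
    have hdropm : p.drop m = N' ++ true :: Q' := by
      rw [heq, hm', show S'.length + 1 = S'.length + 1 from rfl, List.drop_append]
      simp
    have hN'eq : N' = N := by
      rw [hN_def, hdropm, ← hkk, List.take_left]
    have hQ'eq : Q' = Q := by
      have h7 : p.drop t = Q' := by
        rw [show t = m + (N'.length + 1) by omega, ← List.drop_drop, hdropm,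
          List.drop_append]
        simp
      rw [hQ_def, h7]
    rw [hS'eq, hN'eq, hQ'eq]
end
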